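/- Let X, Y satisfy the system (VI_{ν,n}): aX′ = νX − (1−X²)μ_{ν+1}, aY′ = −(ν+1)Y + (1−Y²)μ_ν with μ_ν = (2na/(1−a²))(X+aY)/(1+aXY), μ_{ν+1} = (2na/(1−a²))(aX+Y)/(1+aXY). Set b = a², T = 1/(1+aXY), q = a(aX+Y)/(X+aY). Then dT/db = T(T−1)·n(q² − b)/(b(q−b)(q−1)). -/

import Mathlib

set_option maxHeartbeats 1000000

/-- `q = a(aX+Y)/(X+aY)`. -/
noncomputable def qfun (X Y : ℝ → ℝ) : ℝ → ℝ := fun a => a * (a * X a + Y a) / (X a + a * Y a)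

/-- `T = 1/(1+aXY)`. -/
noncomputable def Tfun (X Y : ℝ → ℝ) : ℝ → ℝ := fun a => (1 + a * X a * Y a)⁻¹

theorem T_derivative_in_b (ν : ℝ) (n : ℕ) (hn : 0 < n) (X Y : ℝ → ℝ) (U : Set ℝ)
    (hUopen : IsOpen U) (hUsub : U ⊆ Set.Ioo (0 : ℝ) 1)
    (hX : ∀ a ∈ U, DifferentiableAt ℝ X a) (hY : ∀ a ∈ U, DifferentiableAt ℝ Y a)
    (hden : ∀ a ∈ U, 1 + a * X a * Y a ≠ 0)
    (hden' : ∀ a ∈ U, X a + a * Y a ≠ 0)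
    (hq1 : ∀ a ∈ U, qfun X Y a ≠ 1)
    (hqb : ∀ a ∈ U, qfun X Y a ≠ a ^ 2)
    (heqX : ∀ a ∈ U, a * deriv X a
        = ν * X a - (1 - X a ^ 2) * (2 * (n : ℝ) * a / (1 - a ^ 2))
            * (a * X a + Y a) / (1 + a * X a * Y a))
    (heqY : ∀ a ∈ U, a * deriv Y a
        = -(ν + 1) * Y a + (1 - Y a ^ 2) * (2 * (n : ℝ) * a / (1 - a ^ 2))
            * (X a + a * Y a) / (1 + a * X a * Y a)) :
    ∀ a ∈ U, (1 / (2 * a)) * deriv (Tfun X Y) a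
      = Tfun X Y a * (Tfun X Y a - 1)
          * ((n : ℝ) * ((qfun X Y a) ^ 2 - a ^ 2))
          / (a ^ 2 * (qfun X Y a - a ^ 2) * (qfun X Y a - 1)) := by
  intro a ha
  obtain ⟨ha0, ha1⟩ := hUsub ha
  have ha0' : a ≠ 0 := ne_of_gt ha0
  have ha2 : 1 - a ^ 2 ≠ 0 := by nlinarith
  have ha2' : a ^ 2 - 1 ≠ 0 := by nlinarith
  have hd := hden a ha
  have hd' := hden' a ha
  have hq1' : qfun X Y a - 1 ≠ 0 := sub_ne_zero.mpr (hq1 a ha)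
  have hqb' : qfun X Y a - a ^ 2 ≠ 0 := sub_ne_zero.mpr (hqb a ha)
  have e1 : qfun X Y a - 1 = (a ^ 2 - 1) * X a / (X a + a * Y a) := by
    unfold qfun; field_simp; ring
  have e2 : qfun X Y a - a ^ 2 = a * Y a * (1 - a ^ 2) / (X a + a * Y a) := by
    unfold qfun; field_simp; ring
  have e3 : qfun X Y a ^ 2 - a ^ 2
      = a ^ 2 * (a ^ 2 - 1) * (X a ^ 2 - Y a ^ 2) / (X a + a * Y a) ^ 2 := by
    unfold qfun; field_simp; ring
  have hXne : X a ≠ 0 := by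
    intro h
    apply hq1'
    rw [e1, h, mul_zero, zero_div]
  have hYne : Y a ≠ 0 := by
    intro h
    apply hqb'
    rw [e2, h, mul_zero, zero_mul, zero_div]
  have hX' := (hX a ha).hasDerivAt
  have hY' := (hY a ha).hasDerivAt
  have hg : HasDerivAt (fun a => 1 + a * X a * Y a)
      (X a * Y a + a * (deriv X a * Y a + X a * deriv Y a)) a := by
    have h := ((hasDerivAt_id a).mul (hX'.mul hY')).const_add 1
    simp only [id_eq, one_mul, Pi.mul_apply] at h
    exact h.congr_of_eventuallyEq (Filter.Eventually.of_forall fun x => by ring)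
  have hT : HasDerivAt (Tfun X Y)
      (-(X a * Y a + a * (deriv X a * Y a + X a * deriv Y a))
        / (1 + a * X a * Y a) ^ 2) a := hg.inv hd
  rw [hT.deriv]
  have hxd : deriv X a
      = (ν * X a - (1 - X a ^ 2) * (2 * (n : ℝ) * a / (1 - a ^ 2))
          * (a * X a + Y a) / (1 + a * X a * Y a)) / a := by
    rw [← heqX a ha]; field_simp
  have hyd : deriv Y a
      = (-(ν + 1) * Y a + (1 - Y a ^ 2) * (2 * (n : ℝ) * a / (1 - a ^ 2))
          * (X a + a * Y a) / (1 + a * X a * Y a)) / a := by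
    rw [← heqY a ha]; field_simp
  rw [hxd, hyd, e1, e2, e3]
  simp only [Tfun]
  field_simp
  ring
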